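/- Let an admissible aggregation of the hourly data be given, and assume the core model attains its minimum. Then the aggregated model also attains its minimum, the optimal values of the two problems are equal, and lifting an optimal solution of the aggregated model (setting x_{g,h} := x̄_{g,Γ(h)}, r_h := r̄_{Γ(h)}, and, for the i-th hour of a block of state σ, s_h := s̄_{π(σ)} + i·r̄_σ) yields an optimal solution of the core model. In other words, under these conditions the temporal aggregation is lossless: the aggregated model is equivalent to the non-aggregated hourly model. -/

import Mathlib

/-- A point of the core (hourly) planning LP: generation `x`, generator
capacities `z`, storage power capacity `t`, storage energy capacity `u`,
net charge `r`, and storage levels `s`. -/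
structure CorePoint (m n : ℕ) where
  x : Fin m → Fin n → ℝ
  z : Fin m → ℝ
  t : ℝ
  u : ℝ
  r : Fin n → ℝ
  s : Fin n → ℝ

/-- Feasibility for the core model (hours cyclic, indices mod `n`). -/
def CoreFeasible {m n : ℕ} [NeZero n] (d : Fin n → ℝ) (a : Fin m → Fin n → ℝ)
    (p : CorePoint m n) : Prop :=
  (∀ g h, 0 ≤ p.x g h) ∧ (∀ g, 0 ≤ p.z g) ∧ 0 ≤ p.t ∧ 0 ≤ p.u ∧ (∀ h, 0 ≤ p.s h) ∧
  (∀ h, (∑ g, p.x g h) + p.r h = d h) ∧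
  (∀ g h, p.x g h ≤ a g h * p.z g) ∧
  (∀ h, p.s h = p.s (h - 1) + p.r h) ∧
  (∀ h, |p.r h| ≤ p.t) ∧
  (∀ h, p.s h ≤ p.u)

/-- Objective of the core model. -/
def CoreObj {m n : ℕ} (cx cz : Fin m → ℝ) (ct cu : ℝ) (p : CorePoint m n) : ℝ :=
  (∑ g, ∑ h, cx g * p.x g h) + (∑ g, cz g * p.z g) + ct * p.t + cu * p.u

/-- A point of the aggregated planning LP, with variables indexed by
states `Fin S` instead of hours. -/
structure AggPoint (m S : ℕ) where
  x : Fin m → Fin S → ℝ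
  z : Fin m → ℝ
  t : ℝ
  u : ℝ
  r : Fin S → ℝ
  s : Fin S → ℝ

/-- An admissible aggregation of the hourly data: a surjection `Γ` from
hours to states such that demand `d` and availability `a` depend only on
the state; the cyclic hour sequence decomposes into maximal runs
("blocks") of consecutive hours with constant state, every block of state
`σ` has the same length `q σ ≥ 1`, and every block of state `σ` is
immediately preceded by a block of state `prev σ` (each state has a unique
incoming connection; uniqueness of the outgoing connection follows).  The
block structure is encoded by `idx h`, the (1-based) position of hour `h`
within its block. -/
structure AdmissibleAgg (m n S : ℕ) [NeZero n] (d : Fin n → ℝ)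
    (a : Fin m → Fin n → ℝ) where
  Γ : Fin n → Fin S
  q : Fin S → ℕ
  prev : Fin S → Fin S
  idx : Fin n → ℕ
  surj : Function.Surjective Γ
  d_compat : ∀ h h', Γ h = Γ h' → d h = d h'
  a_compat : ∀ g h h', Γ h = Γ h' → a g h = a g h'
  q_pos : ∀ σ, 1 ≤ q σ
  idx_one_le : ∀ h, 1 ≤ idx h
  idx_le : ∀ h, idx h ≤ q (Γ h)
  idx_step : ∀ h, idx h < q (Γ h) → idx (h + 1) = idx h + 1 ∧ Γ (h + 1) = Γ h
  idx_end : ∀ h, idx h = q (Γ h) → idx (h + 1) = 1 ∧ Γ (h + 1) ≠ Γ h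
  pred_block : ∀ h, idx h = 1 → Γ (h - 1) = prev (Γ h)

/-- The weight of a state: the number of hours mapped to it. -/
def weight {n S : ℕ} (Γ : Fin n → Fin S) (σ : Fin S) : ℕ :=
  (Finset.univ.filter fun h => Γ h = σ).card

/-- Feasibility for the aggregated model (the aggregated demand `d σ` and
availability `a g σ` are the common values of `d h` and `a g h` over the
fiber `Γ⁻¹ σ`, expressed here fiberwise). -/
def AggFeasible {m n S : ℕ} [NeZero n] {d : Fin n → ℝ} {a : Fin m → Fin n → ℝ}
    (A : AdmissibleAgg m n S d a) (p : AggPoint m S) : Prop :=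
  (∀ g σ, 0 ≤ p.x g σ) ∧ (∀ g, 0 ≤ p.z g) ∧ 0 ≤ p.t ∧ 0 ≤ p.u ∧ (∀ σ, 0 ≤ p.s σ) ∧
  (∀ h, (∑ g, p.x g (A.Γ h)) + p.r (A.Γ h) = d h) ∧
  (∀ g h, p.x g (A.Γ h) ≤ a g h * p.z g) ∧
  (∀ σ, p.s σ = p.s (A.prev σ) + (A.q σ : ℝ) * p.r σ) ∧
  (∀ σ, |p.r σ| ≤ p.t) ∧
  (∀ σ, p.s σ ≤ p.u)

/-- Objective of the aggregated model, with weights `w σ = |Γ⁻¹ σ|`. -/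
def AggObj {m n S : ℕ} (Γ : Fin n → Fin S) (cx cz : Fin m → ℝ) (ct cu : ℝ)
    (p : AggPoint m S) : ℝ :=
  (∑ g, ∑ σ, (weight Γ σ : ℝ) * cx g * p.x g σ) + (∑ g, cz g * p.z g)
    + ct * p.t + cu * p.u

/-- The lifted hourly point of an aggregated point: `x g h := x̄ g (Γ h)`,
`r h := r̄ (Γ h)`, `z, t, u` unchanged, and for the `i`-th hour of a block
of state `σ`, `s h := s̄ (prev σ) + i * r̄ σ`. -/
def liftPoint {m n S : ℕ} [NeZero n] {d : Fin n → ℝ} {a : Fin m → Fin n → ℝ}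
    (A : AdmissibleAgg m n S d a) (p : AggPoint m S) : CorePoint m n where
  x := fun g h => p.x g (A.Γ h)
  z := p.z
  t := p.t
  u := p.u
  r := fun h => p.r (A.Γ h)
  s := fun h => p.s (A.prev (A.Γ h)) + (A.idx h : ℝ) * p.r (A.Γ h)

namespace AggHelpers

open scoped Fin.NatCast Fin.CommRing

variable {m n S : ℕ} [NeZero n] {d : Fin n → ℝ} {a : Fin m → Fin n → ℝ}

lemma rev_step (A : AdmissibleAgg m n S d a) (h : Fin n) (h2 : 2 ≤ A.idx h) :
    A.Γ (h - 1) = A.Γ h ∧ A.idx (h - 1) + 1 = A.idx h := by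
  have e1 : (h - 1) + 1 = h := by ring
  rcases lt_or_eq_of_le (A.idx_le (h - 1)) with hlt | heq
  · obtain ⟨h3, h4⟩ := A.idx_step (h - 1) hlt
    rw [e1] at h3 h4
    exact ⟨h4.symm, by omega⟩
  · obtain ⟨h3, _⟩ := A.idx_end (h - 1) heq
    rw [e1] at h3; omega

lemma end_of_next_one (A : AdmissibleAgg m n S d a) (h : Fin n)
    (h1 : A.idx (h + 1) = 1) : A.idx h = A.q (A.Γ h) := by
  rcases lt_or_eq_of_le (A.idx_le h) with hlt | heq
  · obtain ⟨h3, _⟩ := A.idx_step h hlt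
    have := A.idx_one_le h; omega
  · exact heq

lemma fwd (A : AdmissibleAgg m n S d a) (k : ℕ) : ∀ h : Fin n,
    A.idx h + k ≤ A.q (A.Γ h) →
    A.Γ (h + (k : Fin n)) = A.Γ h ∧ A.idx (h + (k : Fin n)) = A.idx h + k := by
  induction k with
  | zero => intro h _; simp
  | succ k ih =>
    intro h hk
    obtain ⟨hΓ, hidx⟩ := ih h (by omega)
    have hlt : A.idx (h + (k : Fin n)) < A.q (A.Γ (h + (k : Fin n))) := by
      rw [hΓ, hidx]; omega
    obtain ⟨h3, h4⟩ := A.idx_step _ hlt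
    have e : h + ((k + 1 : ℕ) : Fin n) = (h + (k : Fin n)) + 1 := by push_cast; ring
    rw [e]
    exact ⟨by rw [h4, hΓ], by rw [h3, hidx]; omega⟩

lemma bwd (A : AdmissibleAgg m n S d a) (k : ℕ) : ∀ h : Fin n, k < A.idx h →
    A.Γ (h - (k : Fin n)) = A.Γ h ∧ A.idx (h - (k : Fin n)) + k = A.idx h := by
  induction k with
  | zero => intro h _; simp
  | succ k ih =>
    intro h hk
    obtain ⟨hΓ, hidx⟩ := ih h (by omega)
    have h2 : 2 ≤ A.idx (h - (k : Fin n)) := by omega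
    obtain ⟨g1, g2⟩ := rev_step A _ h2
    have e : h - ((k + 1 : ℕ) : Fin n) = (h - (k : Fin n)) - 1 := by push_cast; ring
    rw [e]
    exact ⟨g1.trans hΓ, by omega⟩


variable (A : AdmissibleAgg m n S d a)

def fiber (σ : Fin S) : Finset (Fin n) := Finset.univ.filter fun h => A.Γ h = σ

def ends (σ : Fin S) : Finset (Fin n) :=
  Finset.univ.filter fun h => A.Γ h = σ ∧ A.idx h = A.q σ

variable {A}

lemma mem_fiber {σ : Fin S} {h : Fin n} : h ∈ fiber A σ ↔ A.Γ h = σ := by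
  simp [fiber]

lemma mem_ends {σ : Fin S} {h : Fin n} :
    h ∈ ends A σ ↔ A.Γ h = σ ∧ A.idx h = A.q σ := by simp [ends]

lemma exists_end (σ : Fin S) : (ends A σ).Nonempty := by
  obtain ⟨h, hh⟩ := A.surj σ
  have hle : A.idx h ≤ A.q σ := by rw [← hh]; exact A.idx_le h
  obtain ⟨g1, g2⟩ := AggHelpers.fwd A (A.q σ - A.idx h) h (by rw [hh]; omega)
  refine ⟨h + ((A.q σ - A.idx h : ℕ) : Fin n), ?_⟩
  rw [mem_ends, g1, g2, hh]
  exact ⟨rfl, by omega⟩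

lemma end_sub_q {σ : Fin S} {h : Fin n} (hm : h ∈ ends A σ) :
    h - ((A.q σ : ℕ) : Fin n) ∈ ends A (A.prev σ) := by
  rw [mem_ends] at hm
  obtain ⟨hσ, he⟩ := hm
  have hq := A.q_pos σ
  obtain ⟨g1, g2⟩ := AggHelpers.bwd A (A.q σ - 1) h (by omega)
  have hidx1 : A.idx (h - ((A.q σ - 1 : ℕ) : Fin n)) = 1 := by omega
  have hp := A.pred_block _ hidx1
  have ecast : ((A.q σ - 1 : ℕ) : Fin n) + 1 = ((A.q σ : ℕ) : Fin n) := by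
    obtain ⟨k, hk⟩ : ∃ k, A.q σ = k + 1 := ⟨A.q σ - 1, by omega⟩
    rw [hk, Nat.add_sub_cancel]; push_cast; ring
  have e : (h - ((A.q σ - 1 : ℕ) : Fin n)) - 1 = h - ((A.q σ : ℕ) : Fin n) := by
    rw [← ecast]; ring
  have e2 : (h - ((A.q σ : ℕ) : Fin n)) + 1 = h - ((A.q σ - 1 : ℕ) : Fin n) := by
    rw [← e]; ring
  have hΓ : A.Γ (h - ((A.q σ : ℕ) : Fin n)) = A.prev σ := by
    rw [← e, hp, g1.trans hσ]
  have hend : A.idx (h - ((A.q σ : ℕ) : Fin n)) =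
      A.q (A.Γ (h - ((A.q σ : ℕ) : Fin n))) := by
    apply AggHelpers.end_of_next_one
    rw [e2]; exact hidx1
  rw [mem_ends, hΓ]
  exact ⟨rfl, by rw [← hΓ]; exact hend⟩

lemma prev_surj : Function.Surjective A.prev := by
  intro τ
  obtain ⟨h, hh⟩ := exists_end (A := A) τ
  rw [mem_ends] at hh
  obtain ⟨h1, -⟩ := A.idx_end h (by rw [hh.1]; exact hh.2)
  have hp := A.pred_block (h + 1) h1
  have e : (h + 1) - 1 = h := by ring
  rw [e, hh.1] at hp
  exact ⟨A.Γ (h + 1), hp.symm⟩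

lemma card_ends_prev (σ : Fin S) : (ends A (A.prev σ)).card = (ends A σ).card := by
  have hle : ∀ τ : Fin S, (ends A τ).card ≤ (ends A (A.prev τ)).card := by
    intro τ
    apply Finset.card_le_card_of_injOn (fun h => h - ((A.q τ : ℕ) : Fin n))
    · intro h hm; exact end_sub_q hm
    · intro x _ y _ hxy
      simpa using sub_left_injective hxy
  have hbij : Function.Bijective A.prev :=
    Finite.surjective_iff_bijective.mp prev_surj
  have hsum : ∑ τ : Fin S, ((ends A (A.prev τ)).card) = ∑ τ : Fin S, (ends A τ).card :=
    Fintype.sum_bijective A.prev hbij _ _ (fun τ => rfl)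
  have := (Finset.sum_eq_sum_iff_of_le (fun τ _ => hle τ)).mp hsum.symm σ
    (Finset.mem_univ σ)
  omega

lemma image_ends (σ : Fin S) :
    (ends A σ).image (fun h => h - ((A.q σ : ℕ) : Fin n)) = ends A (A.prev σ) := by
  apply Finset.eq_of_subset_of_card_le
  · intro x hx
    obtain ⟨h, hm, rfl⟩ := Finset.mem_image.mp hx
    exact end_sub_q hm
  · rw [Finset.card_image_of_injective _ (fun x y hxy => by simpa using sub_left_injective hxy)]
    exact (card_ends_prev σ).le
lemma sum_fiber (σ : Fin S) (f : Fin n → ℝ) :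
    ∑ h ∈ fiber A σ, f h
      = ∑ e ∈ ends A σ, ∑ j ∈ Finset.range (A.q σ), f (e - (j : Fin n)) := by
  rw [← Finset.sum_product']
  apply Finset.sum_nbij' (i := fun h => (h + ((A.q σ - A.idx h : ℕ) : Fin n), A.q σ - A.idx h))
    (j := fun p => p.1 - ((p.2 : ℕ) : Fin n))
  · intro h hm
    rw [mem_fiber] at hm
    have hle : A.idx h ≤ A.q σ := by rw [← hm]; exact A.idx_le h
    have h1 := A.idx_one_le h
    obtain ⟨g1, g2⟩ := AggHelpers.fwd A (A.q σ - A.idx h) h (by rw [hm]; omega)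
    rw [Finset.mem_product, mem_ends, g1, g2, hm, Finset.mem_range]
    exact ⟨⟨rfl, by omega⟩, by omega⟩
  · intro p hp
    rw [Finset.mem_product, mem_ends, Finset.mem_range] at hp
    obtain ⟨⟨hΓ, he⟩, hj⟩ := hp
    obtain ⟨g1, g2⟩ := AggHelpers.bwd A p.2 p.1 (by omega)
    rw [mem_fiber, g1, hΓ]
  · intro h hm
    rw [mem_fiber] at hm
    have hle : A.idx h ≤ A.q σ := by rw [← hm]; exact A.idx_le h
    have h1 := A.idx_one_le h
    simp only
    rw [add_sub_cancel_right]
  · intro p hp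
    rw [Finset.mem_product, mem_ends, Finset.mem_range] at hp
    obtain ⟨⟨hΓ, he⟩, hj⟩ := hp
    obtain ⟨g1, g2⟩ := AggHelpers.bwd A p.2 p.1 (by omega)
    have hidx : A.idx (p.1 - ((p.2 : ℕ) : Fin n)) = A.q σ - p.2 := by omega
    have hsub : A.q σ - A.idx (p.1 - ((p.2 : ℕ) : Fin n)) = p.2 := by omega
    have : (p.1 - ((p.2 : ℕ) : Fin n))
        + ((A.q σ - A.idx (p.1 - ((p.2 : ℕ) : Fin n)) : ℕ) : Fin n) = p.1 := by
      rw [hsub]; ring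
    rw [Prod.ext_iff]
    exact ⟨this, hsub⟩
  · intro h hm
    simp only
    rw [add_sub_cancel_right]

lemma card_fiber (σ : Fin S) : (weight A.Γ σ : ℝ) = ((ends A σ).card : ℝ) * (A.q σ : ℝ) := by
  have : ((fiber A σ).card : ℝ) = ∑ h ∈ fiber A σ, (1 : ℝ) := by simp
  rw [show (weight A.Γ σ : ℝ) = ((fiber A σ).card : ℝ) from rfl, this,
    sum_fiber σ (fun _ => (1 : ℝ))]
  simp [mul_comm]

lemma weight_pos (σ : Fin S) : 0 < (weight A.Γ σ : ℝ) := by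
  rw [card_fiber]
  have h1 := exists_end (A := A) σ
  have := A.q_pos σ
  have : (0:ℝ) < ((ends A σ).card : ℝ) := by
    have := Finset.card_pos.mpr h1
    exact_mod_cast this
  positivity

lemma ends_card_pos (σ : Fin S) : 0 < ((ends A σ).card : ℝ) := by
  have := Finset.card_pos.mpr (exists_end (A := A) σ)
  exact_mod_cast this

lemma telescope {p : CorePoint m n} (hs : ∀ h, p.s h = p.s (h - 1) + p.r h) :
    ∀ (k : ℕ) (e : Fin n),
      p.s e = p.s (e - (k : Fin n)) + ∑ j ∈ Finset.range k, p.r (e - (j : Fin n)) := by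
  intro k
  induction k with
  | zero => intro e; simp
  | succ k ih =>
    intro e
    rw [Finset.sum_range_succ]
    have e1 : e - ((k + 1 : ℕ) : Fin n) = (e - (k : Fin n)) - 1 := by push_cast; ring
    have h2 := hs (e - (k : Fin n))
    rw [e1]
    have := ih e
    linarith
variable (A)

noncomputable def avgPoint (p : CorePoint m n) : AggPoint m S where
  x := fun g σ => (∑ h ∈ fiber A σ, p.x g h) / (weight A.Γ σ : ℝ)
  z := p.z
  t := p.t
  u := p.u
  r := fun σ => (∑ h ∈ fiber A σ, p.r h) / (weight A.Γ σ : ℝ)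
  s := fun σ => (∑ h ∈ ends A σ, p.s h) / ((ends A σ).card : ℝ)

variable {A}

lemma fiber_card (σ : Fin S) : ((fiber A σ).card : ℝ) = (weight A.Γ σ : ℝ) := rfl

lemma filter_eq_fiber (σ : Fin S) :
    Finset.filter (fun i => A.Γ i = σ) Finset.univ = fiber A σ := rfl

lemma avg_feasible {p : CorePoint m n} (hp : CoreFeasible d a p) :
    AggFeasible A (avgPoint A p) := by
  obtain ⟨hx0, hz0, ht0, hu0, hs0, hdem, hcap, hsto, hrt, hsu⟩ := hp
  refine ⟨?_, hz0, ht0, hu0, ?_, ?_, ?_, ?_, ?_, ?_⟩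
  · intro g σ
    exact div_nonneg (Finset.sum_nonneg fun h _ => hx0 g h) (weight_pos σ).le
  · intro σ
    exact div_nonneg (Finset.sum_nonneg fun h _ => hs0 h) (ends_card_pos σ).le
  · -- demand
    intro h
    have hw := weight_pos (A := A) (A.Γ h)
    show (∑ g, (∑ h' ∈ fiber A (A.Γ h), p.x g h') / (weight A.Γ (A.Γ h) : ℝ))
        + (∑ h' ∈ fiber A (A.Γ h), p.r h') / (weight A.Γ (A.Γ h) : ℝ) = d h
    rw [← Finset.sum_div, ← add_div, Finset.sum_comm, ← Finset.sum_add_distrib]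
    have : ∀ h' ∈ fiber A (A.Γ h), (∑ g, p.x g h') + p.r h' = d h := by
      intro h' hm
      rw [hdem h']
      exact (A.d_compat h' h (mem_fiber.mp hm)).symm ▸ rfl
    rw [Finset.sum_congr rfl this, Finset.sum_const, nsmul_eq_mul]
    show ((weight A.Γ (A.Γ h) : ℝ) * d h) / _ = d h
    field_simp
  · -- capacity
    intro g h
    have hw := weight_pos (A := A) (A.Γ h)
    show (∑ h' ∈ fiber A (A.Γ h), p.x g h') / (weight A.Γ (A.Γ h) : ℝ) ≤ a g h * p.z g
    rw [div_le_iff₀ hw]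
    calc ∑ h' ∈ fiber A (A.Γ h), p.x g h'
        ≤ ∑ h' ∈ fiber A (A.Γ h), a g h * p.z g := by
          apply Finset.sum_le_sum
          intro h' hm
          rw [← A.a_compat g h' h (mem_fiber.mp hm)]
          exact hcap g h'
      _ = a g h * p.z g * (weight A.Γ (A.Γ h) : ℝ) := by
          rw [Finset.sum_const, nsmul_eq_mul, fiber_card]; ring
  · -- storage
    intro σ
    have hN := ends_card_pos (A := A) σ
    have hq : (0 : ℝ) < (A.q σ : ℝ) := by exact_mod_cast A.q_pos σ
    have hNp : ((ends A (A.prev σ)).card : ℝ) = ((ends A σ).card : ℝ) := by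
      exact_mod_cast card_ends_prev (A := A) σ
    have key : ∑ e ∈ ends A σ, p.s e
        = (∑ e ∈ ends A (A.prev σ), p.s e) + ∑ h ∈ fiber A σ, p.r h := by
      have t1 : ∀ e ∈ ends A σ, p.s e = p.s (e - ((A.q σ : ℕ) : Fin n))
          + ∑ j ∈ Finset.range (A.q σ), p.r (e - (j : Fin n)) :=
        fun e _ => telescope hsto (A.q σ) e
      rw [Finset.sum_congr rfl t1, Finset.sum_add_distrib, ← sum_fiber]
      congr 1
      rw [← image_ends (A := A) σ,
        Finset.sum_image (fun x _ y _ hxy => by simpa using sub_left_injective hxy)]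
    show (∑ e ∈ ends A σ, p.s e) / ((ends A σ).card : ℝ)
        = (∑ e ∈ ends A (A.prev σ), p.s e) / ((ends A (A.prev σ)).card : ℝ)
          + (A.q σ : ℝ) * ((∑ h ∈ fiber A σ, p.r h) / (weight A.Γ σ : ℝ))
    rw [key, hNp, card_fiber]
    rw [add_div]; congr 1
    rw [mul_div_assoc', mul_comm ((ends A σ).card : ℝ), mul_div_mul_left _ _ hq.ne']
  · -- |r| ≤ t
    intro σ
    have hw := weight_pos (A := A) σ
    show |(∑ h ∈ fiber A σ, p.r h) / (weight A.Γ σ : ℝ)| ≤ p.t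
    rw [abs_div, abs_of_pos hw, div_le_iff₀ hw]
    calc |∑ h ∈ fiber A σ, p.r h| ≤ ∑ h ∈ fiber A σ, |p.r h| :=
        Finset.abs_sum_le_sum_abs _ _
      _ ≤ ∑ h ∈ fiber A σ, p.t := Finset.sum_le_sum fun h _ => hrt h
      _ = p.t * (weight A.Γ σ : ℝ) := by
          rw [Finset.sum_const, nsmul_eq_mul, fiber_card]; ring
  · -- s ≤ u
    intro σ
    have hN := ends_card_pos (A := A) σ
    show (∑ e ∈ ends A σ, p.s e) / ((ends A σ).card : ℝ) ≤ p.u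
    rw [div_le_iff₀ hN]
    calc ∑ e ∈ ends A σ, p.s e ≤ ∑ e ∈ ends A σ, p.u := Finset.sum_le_sum fun e _ => hsu e
      _ = p.u * ((ends A σ).card : ℝ) := by rw [Finset.sum_const, nsmul_eq_mul]; ring

lemma avg_obj (cx cz : Fin m → ℝ) (ct cu : ℝ) (p : CorePoint m n) :
    AggObj A.Γ cx cz ct cu (avgPoint A p) = CoreObj cx cz ct cu p := by
  unfold AggObj CoreObj
  have : ∀ g, ∑ σ, (weight A.Γ σ : ℝ) * cx g * (avgPoint A p).x g σ
      = ∑ h, cx g * p.x g h := by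
    intro g
    have e1 : ∀ σ : Fin S, (weight A.Γ σ : ℝ) * cx g * (avgPoint A p).x g σ
        = ∑ h ∈ fiber A σ, cx g * p.x g h := by
      intro σ
      show (weight A.Γ σ : ℝ) * cx g * ((∑ h ∈ fiber A σ, p.x g h) / (weight A.Γ σ : ℝ)) = _
      rw [← Finset.mul_sum]
      field_simp [(weight_pos (A := A) σ).ne']
    rw [Finset.sum_congr rfl (fun σ _ => e1 σ)]
    exact Finset.sum_fiberwise _ _ _
  rw [Finset.sum_congr rfl (fun g _ => this g)]
  rfl

lemma lift_obj (cx cz : Fin m → ℝ) (ct cu : ℝ) (pb : AggPoint m S) :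
    CoreObj cx cz ct cu (liftPoint A pb) = AggObj A.Γ cx cz ct cu pb := by
  unfold AggObj CoreObj
  have : ∀ g, ∑ h, cx g * (liftPoint A pb).x g h
      = ∑ σ, (weight A.Γ σ : ℝ) * cx g * pb.x g σ := by
    intro g
    rw [← Finset.sum_fiberwise Finset.univ A.Γ (fun h => cx g * (liftPoint A pb).x g h)]
    apply Finset.sum_congr rfl
    intro σ _
    rw [filter_eq_fiber]
    have : ∀ h ∈ fiber A σ, cx g * (liftPoint A pb).x g h = cx g * pb.x g σ := by
      intro h hm
      show cx g * pb.x g (A.Γ h) = _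
      rw [mem_fiber.mp hm]
    rw [Finset.sum_congr rfl this, Finset.sum_const, nsmul_eq_mul]
    rw [fiber_card]
    ring
  rw [Finset.sum_congr rfl (fun g _ => this g)]
  rfl
lemma lift_feasible {pb : AggPoint m S} (hpb : AggFeasible A pb) :
    CoreFeasible d a (liftPoint A pb) := by
  obtain ⟨hx0, hz0, ht0, hu0, hs0, hdem, hcap, hsto, hrt, hsu⟩ := hpb
  have sbound : ∀ h : Fin n, 0 ≤ pb.s (A.prev (A.Γ h)) + (A.idx h : ℝ) * pb.r (A.Γ h)
      ∧ pb.s (A.prev (A.Γ h)) + (A.idx h : ℝ) * pb.r (A.Γ h) ≤ pb.u := by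
    intro h
    set σ := A.Γ h
    have h1 : (1 : ℝ) ≤ (A.idx h : ℝ) := by exact_mod_cast A.idx_one_le h
    have h2 : (A.idx h : ℝ) ≤ (A.q σ : ℝ) := by exact_mod_cast A.idx_le h
    have e := hsto σ
    have b1 := hs0 σ
    have b2 := hs0 (A.prev σ)
    have b3 := hsu σ
    have b4 := hsu (A.prev σ)
    rcases le_or_gt 0 (pb.r σ) with hr | hr
    · constructor
      · nlinarith
      · nlinarith
    · constructor
      · nlinarith
      · nlinarith
  refine ⟨fun g h => hx0 g (A.Γ h), hz0, ht0, hu0,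
    fun h => (sbound h).1, hdem, hcap, ?_, fun h => hrt (A.Γ h), fun h => (sbound h).2⟩
  -- storage equation
  intro h
  show pb.s (A.prev (A.Γ h)) + (A.idx h : ℝ) * pb.r (A.Γ h)
      = pb.s (A.prev (A.Γ (h - 1))) + (A.idx (h - 1) : ℝ) * pb.r (A.Γ (h - 1))
        + pb.r (A.Γ h)
  rcases eq_or_lt_of_le (A.idx_one_le h) with heq | hlt
  · -- idx h = 1
    have hp := A.pred_block h heq.symm
    have hend : A.idx (h - 1) = A.q (A.Γ (h - 1)) := by
      apply AggHelpers.end_of_next_one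
      rw [show (h - 1) + 1 = h from by ring, ← heq]
    rw [hp, ← heq]
    have := hsto (A.prev (A.Γ h))
    rw [this, hend, hp]
    push_cast
    ring
  · -- 2 ≤ idx h
    obtain ⟨g1, g2⟩ := AggHelpers.rev_step A h hlt
    rw [g1]
    have : (A.idx (h - 1) : ℝ) + 1 = (A.idx h : ℝ) := by exact_mod_cast g2
    rw [← this]
    ring
end AggHelpers
/-!
STATEMENT 11: Given an admissible aggregation, if the core model attains
its minimum, then the aggregated model also attains its minimum, the
optimal values of the two problems are equal, and lifting any optimal
solution of the aggregated model yields an optimal solution of the core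
model: the temporal aggregation is lossless.
-/

theorem aggregation_lossless
    {m n S : ℕ} [NeZero n]
    (cx cz : Fin m → ℝ) (ct cu : ℝ)
    (d : Fin n → ℝ) (a : Fin m → Fin n → ℝ)
    (A : AdmissibleAgg m n S d a)
    (hmin : ∃ p : CorePoint m n, CoreFeasible d a p ∧
      ∀ p' : CorePoint m n, CoreFeasible d a p' →
        CoreObj cx cz ct cu p ≤ CoreObj cx cz ct cu p') :
    -- the aggregated model attains its minimum
    (∃ pb : AggPoint m S, AggFeasible A pb ∧
      ∀ pb' : AggPoint m S, AggFeasible A pb' →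
        AggObj A.Γ cx cz ct cu pb ≤ AggObj A.Γ cx cz ct cu pb') ∧
    -- the optimal values of the two problems are equal
    (∀ p : CorePoint m n, ∀ pb : AggPoint m S,
      CoreFeasible d a p →
      (∀ p' : CorePoint m n, CoreFeasible d a p' →
        CoreObj cx cz ct cu p ≤ CoreObj cx cz ct cu p') →
      AggFeasible A pb →
      (∀ pb' : AggPoint m S, AggFeasible A pb' →
        AggObj A.Γ cx cz ct cu pb ≤ AggObj A.Γ cx cz ct cu pb') →
      CoreObj cx cz ct cu p = AggObj A.Γ cx cz ct cu pb) ∧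
    -- lifting an optimal solution of the aggregated model yields an optimal
    -- solution of the core model
    (∀ pb : AggPoint m S, AggFeasible A pb →
      (∀ pb' : AggPoint m S, AggFeasible A pb' →
        AggObj A.Γ cx cz ct cu pb ≤ AggObj A.Γ cx cz ct cu pb') →
      CoreFeasible d a (liftPoint A pb) ∧
      (∀ p' : CorePoint m n, CoreFeasible d a p' →
        CoreObj cx cz ct cu (liftPoint A pb) ≤ CoreObj cx cz ct cu p')) := by
  obtain ⟨p0, hp0f, hp0opt⟩ := hmin
  have aggopt : ∀ pb' : AggPoint m S, AggFeasible A pb' →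
      AggObj A.Γ cx cz ct cu (AggHelpers.avgPoint A p0) ≤ AggObj A.Γ cx cz ct cu pb' := by
    intro pb' hpb'
    rw [AggHelpers.avg_obj, ← AggHelpers.lift_obj]
    exact hp0opt _ (AggHelpers.lift_feasible hpb')
  refine ⟨⟨AggHelpers.avgPoint A p0, AggHelpers.avg_feasible hp0f, aggopt⟩, ?_, ?_⟩
  · intro p pb hpf hpopt hpbf hpbopt
    have h1 : CoreObj cx cz ct cu p ≤ AggObj A.Γ cx cz ct cu pb := by
      rw [← AggHelpers.lift_obj]
      exact hpopt _ (AggHelpers.lift_feasible hpbf)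
    have h2 : AggObj A.Γ cx cz ct cu pb ≤ CoreObj cx cz ct cu p := by
      rw [← AggHelpers.avg_obj (A := A) cx cz ct cu p]
      exact hpbopt _ (AggHelpers.avg_feasible hpf)
    linarith
  · intro pb hpbf hpbopt
    refine ⟨AggHelpers.lift_feasible hpbf, ?_⟩
    intro p' hp'f
    rw [AggHelpers.lift_obj, ← AggHelpers.avg_obj (A := A) cx cz ct cu p']
    exact hpbopt _ (AggHelpers.avg_feasible hp'f)
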